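/- If CH holds for all compound systems and each system Γ has an entropy function S_Γ in the sense of Theorem 1, then there exist constants a_Γ > 0 and B(Γ) such that S(X) := a_Γ S_Γ(X) + B(Γ) is additive (S(X,Y) = S(X) + S(Y)), extensive (S(λX) = λS(X)), and monotone: for X, Y in the same state space, X ≺ Y if and only if S(X) ≤ S(Y). -/

import Mathlib

/- Compound states of arbitrary (scaled) systems are modelled as lists of pairs
`(λ, X)` where `λ > 0` and `X` is a state of one of the systems `Γ i`. -/

/-- Scaling of a compound state. -/
def scaleL {α : Type*} (t : ℝ) (X : List (ℝ × α)) : List (ℝ × α) :=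
  X.map (fun p => (t * p.1, p.2))

/-- All scaling coefficients are positive. -/
def posL {α : Type*} (X : List (ℝ × α)) : Prop := ∀ p ∈ X, 0 < p.1

/-- Total mass. -/
def massL {α : Type*} (X : List (ℝ × α)) : ℝ := (X.map Prod.fst).sum

/-- The total entropy `Σ λᵢ S(Xᵢ)`. -/
def entL {α : Type*} (S : α → ℝ) (X : List (ℝ × α)) : ℝ :=
  (X.map (fun p => p.1 * S p.2)).sum

/-- A compound state of scaled copies of the single system `Γ i`, viewed as a
compound state of the whole collection. -/
def liftL {ι : Type*} {Γ : ι → Type*} (i : ι) (X : List (ℝ × Γ i)) :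
    List (ℝ × Σ j, Γ j) :=
  X.map (fun p => (p.1, ⟨i, p.2⟩))

/-- Two compound states belong to the same state space: same scaled copies of
the same systems (up to order). -/
def SameSpace {ι : Type*} {Γ : ι → Type*} (X Y : List (ℝ × Σ j, Γ j)) : Prop :=
  (X.map (fun p => (p.1, p.2.1))).Perm (Y.map (fun p => (p.1, p.2.1)))

/-- `S` is an entropy function for the system `Γ i` in the sense of Theorem 1. -/
def IsEntropyFor {ι : Type*} {Γ : ι → Type*}
    (prec : List (ℝ × Σ j, Γ j) → List (ℝ × Σ j, Γ j) → Prop)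
    (i : ι) (S : Γ i → ℝ) : Prop :=
  ∀ X Y : List (ℝ × Γ i), X ≠ [] → Y ≠ [] → posL X → posL Y →
    massL X = massL Y →
    (prec (liftL i X) (liftL i Y) ↔ entL S X ≤ entL S Y)

-- general list lemmas
section lists
variable {α : Type*} {t u : ℝ} {X Y : List (ℝ × α)}

@[simp] lemma scaleL_nil : scaleL t ([] : List (ℝ × α)) = [] := rfl
@[simp] lemma scaleL_cons (p : ℝ × α) :
    scaleL t (p :: X) = (t * p.1, p.2) :: scaleL t X := rfl
lemma scaleL_append : scaleL t (X ++ Y) = scaleL t X ++ scaleL t Y :=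
  List.map_append
lemma scaleL_scaleL : scaleL t (scaleL u X) = scaleL (t * u) X := by
  simp [scaleL, List.map_map, Function.comp, mul_assoc]
@[simp] lemma scaleL_one : scaleL 1 X = X := by simp [scaleL]
@[simp] lemma posL_nil : posL ([] : List (ℝ × α)) := by simp [posL]
lemma posL_cons {p : ℝ × α} : posL (p :: X) ↔ 0 < p.1 ∧ posL X := by
  simp [posL]
lemma posL_append : posL (X ++ Y) ↔ posL X ∧ posL Y := by
  simp [posL, or_imp, forall_and]
lemma posL_of_perm (h : X.Perm Y) (hX : posL X) : posL Y :=
  fun p hp => hX p (h.symm.subset hp)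
lemma posL_scaleL (ht : 0 < t) (hX : posL X) : posL (scaleL t X) := by
  intro p hp
  simp only [scaleL, List.mem_map] at hp
  obtain ⟨q, hq, rfl⟩ := hp
  exact mul_pos ht (hX q hq)
@[simp] lemma entL_nil (S : α → ℝ) : entL S ([] : List (ℝ × α)) = 0 := rfl
@[simp] lemma entL_cons (S : α → ℝ) (p : ℝ × α) :
    entL S (p :: X) = p.1 * S p.2 + entL S X := rfl
lemma entL_append (S : α → ℝ) : entL S (X ++ Y) = entL S X + entL S Y := by
  simp [entL]
lemma entL_scaleL (S : α → ℝ) : entL S (scaleL t X) = t * entL S X := by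
  induction X with
  | nil => simp
  | cons p X ih => simp [ih]; ring
lemma entL_perm (S : α → ℝ) (h : X.Perm Y) : entL S X = entL S Y :=
  (h.map _).sum_eq
@[simp] lemma massL_nil : massL ([] : List (ℝ × α)) = 0 := rfl
@[simp] lemma massL_cons (p : ℝ × α) : massL (p :: X) = p.1 + massL X := rfl
end lists

@[simp] lemma liftL_nil {ι : Type*} {Γ : ι → Type*} (i : ι) :
    liftL (Γ := Γ) i [] = [] := rfl
@[simp] lemma liftL_cons {ι : Type*} {Γ : ι → Type*} (i : ι) (p : ℝ × Γ i)
    (X : List (ℝ × Γ i)) : liftL i (p :: X) = (p.1, ⟨i, p.2⟩) :: liftL i X := rfl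

universe u v

structure LY (ι : Type u) (Γ : ι → Type v) where
  prec : List (ℝ × Σ j, Γ j) → List (ℝ × Σ j, Γ j) → Prop
  S : ∀ i, Γ i → ℝ
  hperm : ∀ X X' Y Y' : List (ℝ × Σ j, Γ j), X.Perm X' → Y.Perm Y' →
      (prec X Y ↔ prec X' Y')
  A1 : ∀ X, prec X X
  A2 : ∀ X Y Z, prec X Y → prec Y Z → prec X Z
  A3 : ∀ X X' Y Y', prec X X' → prec Y Y' → prec (X ++ Y) (X' ++ Y')
  A4 : ∀ t : ℝ, 0 < t → ∀ X Y, prec X Y → prec (scaleL t X) (scaleL t Y)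
  A5 : ∀ (l t : ℝ) (x : Σ j, Γ j), 0 < l → l < 1 → 0 < t →
      prec [(t, x)] [((1 - l) * t, x), (l * t, x)] ∧
      prec [((1 - l) * t, x), (l * t, x)] [(t, x)]
  A6 : ∀ X Y Z₀ Z₁ (ε : ℕ → ℝ), (∀ n, 0 < ε n) →
      Filter.Tendsto ε Filter.atTop (nhds 0) →
      (∀ n, prec (X ++ scaleL (ε n) Z₀) (Y ++ scaleL (ε n) Z₁)) → prec X Y
  CH : ∀ X Y : List (ℝ × Σ j, Γ j), posL X → posL Y → SameSpace X Y →
      prec X Y ∨ prec Y X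
  hS : ∀ i, IsEntropyFor prec i (S i)

namespace LY
variable {ι : Type u} {Γ : ι → Type v} (H : LY ι Γ)

/-- adiabatic equivalence -/
def equ (X Y : List (ℝ × Σ j, Γ j)) : Prop := H.prec X Y ∧ H.prec Y X

variable {H}

lemma equ.symm {X Y} (h : H.equ X Y) : H.equ Y X := ⟨h.2, h.1⟩
lemma equ.trans {X Y Z} (h : H.equ X Y) (h' : H.equ Y Z) : H.equ X Z :=
  ⟨H.A2 _ _ _ h.1 h'.1, H.A2 _ _ _ h'.2 h.2⟩
lemma equ_refl (X) : H.equ X X := ⟨H.A1 X, H.A1 X⟩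
lemma equ_of_perm {X Y} (h : X.Perm Y) : H.equ X Y :=
  ⟨(H.hperm X X X Y (List.Perm.refl X) h).mp (H.A1 X),
   (H.hperm Y Y Y X (List.Perm.refl Y) h.symm).mp (H.A1 Y)⟩
lemma equ.append {X X' Y Y'} (h : H.equ X X') (h' : H.equ Y Y') :
    H.equ (X ++ Y) (X' ++ Y') := ⟨H.A3 _ _ _ _ h.1 h'.1, H.A3 _ _ _ _ h.2 h'.2⟩
lemma equ.cons {X Y} (p) (h : H.equ X Y) : H.equ (p :: X) (p :: Y) :=
  (equ_refl [p]).append h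
lemma equ.scale {X Y} {t : ℝ} (ht : 0 < t) (h : H.equ X Y) :
    H.equ (scaleL t X) (scaleL t Y) := ⟨H.A4 t ht _ _ h.1, H.A4 t ht _ _ h.2⟩
lemma prec_of_perm {X X' Y Y'} (hX : X.Perm X') (hY : Y.Perm Y')
    (h : H.prec X Y) : H.prec X' Y' := (H.hperm X X' Y Y' hX hY).mp h

/-- splitting a single scaled state -/
lemma split_single {lam mu : ℝ} (hl : 0 < lam) (hm : 0 < mu) (x : Σ j, Γ j) :
    H.equ [(lam + mu, x)] [(lam, x), (mu, x)] := by
  have ht : (0:ℝ) < lam + mu := by linarith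
  have h := H.A5 (mu / (lam + mu)) (lam + mu) x (by positivity)
    (by rw [div_lt_one ht]; linarith) ht
  have e1 : (1 - mu / (lam + mu)) * (lam + mu) = lam := by field_simp; ring
  have e2 : mu / (lam + mu) * (lam + mu) = mu := by field_simp
  rw [e1, e2] at h
  exact ⟨h.1, h.2⟩

lemma split_list {t : ℝ} (ht : 0 < t) (ht1 : t < 1) {X : List (ℝ × Σ j, Γ j)}
    (hX : posL X) : H.equ X (scaleL t X ++ scaleL (1 - t) X) := by
  induction X with
  | nil => exact equ_refl []
  | cons p X ih =>
    rw [posL_cons] at hX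
    have hsp : H.equ [p] [(t * p.1, p.2), ((1 - t) * p.1, p.2)] := by
      have := split_single (H := H) (lam := t * p.1) (mu := (1 - t) * p.1)
        (mul_pos ht hX.1) (mul_pos (by linarith) hX.1) p.2
      rw [show t * p.1 + (1 - t) * p.1 = p.1 by ring] at this
      exact this
    have h2 : H.equ (p :: X)
        (((t * p.1, p.2) :: ((1 - t) * p.1, p.2) :: []) ++
          (scaleL t X ++ scaleL (1 - t) X)) :=
      (hsp.append (ih hX.2))
    refine h2.trans (equ_of_perm ?_)
    simp only [scaleL_cons, List.cons_append, List.nil_append]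
    exact List.Perm.cons _ List.perm_middle.symm
end LY

namespace LY
variable {ι : Type u} {Γ : ι → Type v} {H : LY ι Γ}

lemma cancel {X Y Z : List (ℝ × Σ j, Γ j)} (hX : posL X) (hY : posL Y)
    (h : H.prec (X ++ Z) (Y ++ Z)) : H.prec X Y := by
  have half : (0:ℝ) < 1/2 := by norm_num
  have key : ∀ n : ℕ, H.prec (X ++ scaleL ((1/2:ℝ)^n) Z) (Y ++ scaleL ((1/2:ℝ)^n) Z) := by
    intro n
    induction n with
    | zero => simpa using h
    | succ n ih =>
      set e : ℝ := (1/2:ℝ)^n with he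
      have hepos : 0 < e := by positivity
      have hs : (1/2:ℝ)^(n+1) = (1/2) * e := by rw [he]; ring
      rw [hs]
      have h2 : H.prec (scaleL (1/2) X ++ scaleL ((1/2)*e) Z)
          (scaleL (1/2) Y ++ scaleL ((1/2)*e) Z) := by
        have := H.A4 (1/2) half _ _ ih
        rwa [scaleL_append, scaleL_append, scaleL_scaleL] at this
      have hsX : H.equ X (scaleL (1/2) X ++ scaleL (1/2) X) := by
        have := split_list (H := H) half (by norm_num) hX
        rwa [show (1:ℝ) - 1/2 = 1/2 by norm_num] at this
      have hsY : H.equ Y (scaleL (1/2) Y ++ scaleL (1/2) Y) := by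
        have := split_list (H := H) half (by norm_num) hY
        rwa [show (1:ℝ) - 1/2 = 1/2 by norm_num] at this
      -- chain
      have s1 : H.prec (X ++ scaleL ((1/2)*e) Z)
          ((scaleL (1/2) X ++ scaleL (1/2) X) ++ scaleL ((1/2)*e) Z) :=
        H.A3 _ _ _ _ hsX.1 (H.A1 _)
      have s2 : H.prec ((scaleL (1/2) X ++ scaleL (1/2) X) ++ scaleL ((1/2)*e) Z)
          (scaleL (1/2) X ++ (scaleL (1/2) Y ++ scaleL ((1/2)*e) Z)) := by
        rw [List.append_assoc]
        exact H.A3 _ _ _ _ (H.A1 _) h2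
      have s3 : H.prec (scaleL (1/2) X ++ (scaleL (1/2) Y ++ scaleL ((1/2)*e) Z))
          (scaleL (1/2) Y ++ (scaleL (1/2) X ++ scaleL ((1/2)*e) Z)) := by
        refine (H.hperm _ _ _ _ (List.Perm.refl _) ?_).mp (H.A1 _)
        rw [← List.append_assoc, ← List.append_assoc]
        exact (List.perm_append_comm).append_right _
      have s4 : H.prec (scaleL (1/2) Y ++ (scaleL (1/2) X ++ scaleL ((1/2)*e) Z))
          (scaleL (1/2) Y ++ (scaleL (1/2) Y ++ scaleL ((1/2)*e) Z)) :=
        H.A3 _ _ _ _ (H.A1 _) h2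
      have s5 : H.prec (scaleL (1/2) Y ++ (scaleL (1/2) Y ++ scaleL ((1/2)*e) Z))
          (Y ++ scaleL ((1/2)*e) Z) := by
        rw [← List.append_assoc]
        exact H.A3 _ _ _ _ hsY.2 (H.A1 _)
      exact H.A2 _ _ _ s1 (H.A2 _ _ _ s2 (H.A2 _ _ _ s3 (H.A2 _ _ _ s4 s5)))
  exact H.A6 X Y Z Z (fun n => (1/2:ℝ)^n) (fun n => by positivity)
    (tendsto_pow_atTop_nhds_zero_of_lt_one (by norm_num) (by norm_num)) key

lemma cancel_equ {X Y Z : List (ℝ × Σ j, Γ j)} (hX : posL X) (hY : posL Y)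
    (h : H.equ (X ++ Z) (Y ++ Z)) : H.equ X Y :=
  ⟨cancel hX hY h.1, cancel hY hX h.2⟩
end LY

namespace LY
variable {ι : Type u} {Γ : ι → Type v} {H : LY ι Γ}

lemma posL1 {a : ℝ} {x : Σ j, Γ j} (h : 0 < a) : posL [(a,x)] := by simp [posL, h]
lemma posL2 {a b : ℝ} {x y : Σ j, Γ j} (h : 0 < a) (h' : 0 < b) :
    posL [(a,x),(b,y)] := by simp [posL, h, h']
lemma posL3 {a b c : ℝ} {x y z : Σ j, Γ j} (h : 0 < a) (h' : 0 < b) (h'' : 0 < c) :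
    posL [(a,x),(b,y),(c,z)] := by simp [posL, h, h', h'']

lemma single_iff {i : ι} {x y : Γ i} {lam : ℝ} (hl : 0 < lam) :
    H.prec [(lam, ⟨i,x⟩)] [(lam, ⟨i,y⟩)] ↔ H.S i x ≤ H.S i y := by
  have h := H.hS i [(lam,x)] [(lam,y)] (by simp) (by simp)
    (by simp [posL, hl]) (by simp [posL, hl]) (by simp [massL])
  simp only [liftL_cons, liftL_nil] at h
  rw [h]
  simp only [entL_cons, entL_nil, add_zero]
  exact mul_le_mul_iff_right₀ hl

lemma single_prec {i : ι} {x y : Γ i} {lam : ℝ} (hl : 0 < lam)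
    (he : H.S i x ≤ H.S i y) : H.prec [(lam, ⟨i,x⟩)] [(lam, ⟨i,y⟩)] :=
  (single_iff hl).2 he

lemma single_equ {i : ι} {x y : Γ i} {lam : ℝ} (hl : 0 < lam)
    (he : H.S i x = H.S i y) : H.equ [(lam, ⟨i,x⟩)] [(lam, ⟨i,y⟩)] :=
  ⟨single_prec hl he.le, single_prec hl he.ge⟩

/-- The key calibration lemma: for every system `i` there is a positive
constant `a` such that entropy changes in `Γ i` can be traded against the
reference pair `Y₀ Y₁` in the system `i₀` at rate `a`. -/
theorem exists_transfer {i₀ : ι} {Y₀ Y₁ : Γ i₀} (hY : H.S i₀ Y₀ < H.S i₀ Y₁) (i : ι) :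
    ∃ a : ℝ, 0 < a ∧ ∀ (x y : Γ i), H.S i y < H.S i x →
      ∀ lam p q : ℝ, 0 < lam → 0 < q → lam * a * (H.S i x - H.S i y) < p →
      H.equ [(lam,⟨i,x⟩),(p,⟨i₀,Y₀⟩),(q,⟨i₀,Y₁⟩)]
        [(lam,⟨i,y⟩),(p - lam * a * (H.S i x - H.S i y),⟨i₀,Y₀⟩),
          (q + lam * a * (H.S i x - H.S i y),⟨i₀,Y₁⟩)] := by
  by_cases hP : ∃ u v : Γ i, H.S i v < H.S i u
  · obtain ⟨x₁, x₀, hx⟩ := hP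
    set w₀ : Σ j, Γ j := ⟨i₀, Y₀⟩ with hw₀
    set w₁ : Σ j, Γ j := ⟨i₀, Y₁⟩ with hw₁
    set xv₀ : Σ j, Γ j := ⟨i, x₀⟩ with hxv₀
    set xv₁ : Σ j, Γ j := ⟨i, x₁⟩ with hxv₁
    have hΔ : 0 < H.S i x₁ - H.S i x₀ := sub_pos.2 hx
    have hΔ₀ : 0 < H.S i₀ Y₁ - H.S i₀ Y₀ := sub_pos.2 hY
    set A : ℝ → List (ℝ × Σ j, Γ j) := fun l => [(1,xv₁),(l,w₀)] with hA
    set B : ℝ → List (ℝ × Σ j, Γ j) := fun l => [(1,xv₀),(l,w₁)] with hB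
    set E : Set ℝ := {l | 0 < l ∧ H.prec (A l) (B l)} with hE
    set F : Set ℝ := {l | 0 < l ∧ H.prec (B l) (A l)} with hF
    have one_pos' : (0:ℝ) < 1 := one_pos
    have hCH : ∀ l : ℝ, 0 < l → l ∈ E ∨ l ∈ F := by
      intro l hl
      have := H.CH (A l) (B l) (posL2 one_pos hl) (posL2 one_pos hl)
        (by simp [SameSpace, hA, hB]; try exact List.Perm.refl _)
      rcases this with h | h
      · exact Or.inl ⟨hl, h⟩
      · exact Or.inr ⟨hl, h⟩
    -- E is upward closed
    have E_up : ∀ l ∈ E, ∀ l', l < l' → l' ∈ E := by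
      rintro l ⟨hl, hpr⟩ l' hll'
      have hd : 0 < l' - l := by linarith
      have c1 : H.equ (A l') [(1,xv₁),(l,w₀),(l'-l,w₀)] := by
        have hsp := split_single (H := H) hl hd w₀
        rw [show l + (l' - l) = l' by ring] at hsp
        exact (equ_refl [(1,xv₁)]).append hsp
      have c2 : H.prec [(1,xv₁),(l,w₀),(l'-l,w₀)] [(1,xv₀),(l,w₁),(l'-l,w₀)] :=
        H.A3 (A l) (B l) [(l'-l,w₀)] [(l'-l,w₀)] hpr (H.A1 _)
      have c3 : H.prec [(1,xv₀),(l,w₁),(l'-l,w₀)] [(1,xv₀),(l,w₁),(l'-l,w₁)] :=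
        H.A3 [(1,xv₀),(l,w₁)] [(1,xv₀),(l,w₁)] [(l'-l,w₀)] [(l'-l,w₁)] (H.A1 _)
          (single_prec hd hY.le)
      have c4 : H.equ [(1,xv₀),(l,w₁),(l'-l,w₁)] (B l') := by
        have hsp := split_single (H := H) hl hd w₁
        rw [show l + (l' - l) = l' by ring] at hsp
        exact ((equ_refl [(1,xv₀)]).append hsp).symm
      exact ⟨by linarith, H.A2 _ _ _ c1.1 (H.A2 _ _ _ c2 (H.A2 _ _ _ c3 c4.1))⟩
    -- F is downward closed
    have F_down : ∀ l ∈ F, ∀ l', 0 < l' → l' < l → l' ∈ F := by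
      rintro l ⟨hl, hpr⟩ l' hl' hll'
      have hd : 0 < l - l' := by linarith
      have c1 : H.equ [(1,xv₀),(l',w₁),(l-l',w₁)] (B l) := by
        have hsp := split_single (H := H) hl' hd w₁
        rw [show l' + (l - l') = l by ring] at hsp
        exact ((equ_refl [(1,xv₀)]).append hsp).symm
      have c2 : H.equ (A l) [(1,xv₁),(l',w₀),(l-l',w₀)] := by
        have hsp := split_single (H := H) hl' hd w₀
        rw [show l' + (l - l') = l by ring] at hsp
        exact (equ_refl [(1,xv₁)]).append hsp
      have c3 : H.prec [(1,xv₁),(l',w₀),(l-l',w₀)] [(1,xv₁),(l',w₀),(l-l',w₁)] :=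
        H.A3 [(1,xv₁),(l',w₀)] [(1,xv₁),(l',w₀)] [(l-l',w₀)] [(l-l',w₁)] (H.A1 _)
          (single_prec hd hY.le)
      have main : H.prec (B l' ++ [(l-l',w₁)]) (A l' ++ [(l-l',w₁)]) :=
        H.A2 _ _ _ c1.1 (H.A2 _ _ _ hpr (H.A2 _ _ _ c2.1 c3))
      exact ⟨hl', cancel (posL2 one_pos hl') (posL2 one_pos hl') main⟩
    -- elements of F are below elements of E
    have F_le_E : ∀ l ∈ E, ∀ m ∈ F, m ≤ l := by
      rintro l ⟨hl, hprE⟩ m ⟨hm, hprF⟩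
      by_contra hc
      push_neg at hc
      have hd : 0 < m - l := by linarith
      have c2 : H.equ (A m) [(1,xv₁),(l,w₀),(m-l,w₀)] := by
        have hsp := split_single (H := H) hl hd w₀
        rw [show l + (m - l) = m by ring] at hsp
        exact (equ_refl [(1,xv₁)]).append hsp
      have c3 : H.prec [(1,xv₁),(l,w₀),(m-l,w₀)] [(1,xv₀),(l,w₁),(m-l,w₀)] :=
        H.A3 (A l) (B l) [(m-l,w₀)] [(m-l,w₀)] hprE (H.A1 _)
      have main : H.prec (B m) [(1,xv₀),(l,w₁),(m-l,w₀)] :=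
        H.A2 _ _ _ hprF (H.A2 _ _ _ c2.1 c3)
      have rot : H.prec ([(m,w₁)] ++ [(1,xv₀)]) ([(l,w₁),(m-l,w₀)] ++ [(1,xv₀)]) := by
        refine prec_of_perm ?_ ?_ main
        · exact (List.perm_append_comm (l₁ := [(1,xv₀)]) (l₂ := [(m,w₁)]))
        · exact (List.perm_append_comm (l₁ := [(1,xv₀)]) (l₂ := [(l,w₁),(m-l,w₀)]))
      have canc : H.prec [(m,w₁)] [(l,w₁),(m-l,w₀)] :=
        cancel (posL1 hm) (posL2 hl hd) rot
      have h := H.hS i₀ [(m,Y₁)] [(l,Y₁),(m-l,Y₀)] (by simp) (by simp)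
        (by simp [posL, hm]) (by simp [posL, hl, hd]) (by simp [massL]; try ring)
      simp only [liftL_cons, liftL_nil] at h
      have := h.1 canc
      simp only [entL_cons, entL_nil, add_zero] at this
      nlinarith
    -- E nonempty
    have E_ne : E.Nonempty := by
      by_contra hne
      rw [Set.not_nonempty_iff_eq_empty] at hne
      have hFall : ∀ l : ℝ, 0 < l → H.prec (B l) (A l) := by
        intro l hl
        rcases hCH l hl with h | h
        · exact absurd h (by simp [hne])
        · exact h.2
      have key : ∀ n : ℕ, H.prec ([(1,w₁)] ++ scaleL ((1/2:ℝ)^n) [(1,xv₀)])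
          ([(1,w₀)] ++ scaleL ((1/2:ℝ)^n) [(1,xv₁)]) := by
        intro n
        set e : ℝ := (1/2:ℝ)^n with he
        have hepos : 0 < e := by positivity
        have hl : (0:ℝ) < e⁻¹ := by positivity
        have h := H.A4 e hepos _ _ (hFall e⁻¹ hl)
        simp only [hB, hA, scaleL_cons, scaleL_nil, mul_one,
          mul_inv_cancel₀ (ne_of_gt hepos)] at h
        simp only [scaleL_cons, scaleL_nil, mul_one, List.singleton_append]
        refine prec_of_perm ?_ ?_ h
        · exact List.Perm.swap _ _ _
        · exact List.Perm.swap _ _ _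
      have := H.A6 [(1,w₁)] [(1,w₀)] [(1,xv₀)] [(1,xv₁)] (fun n => (1/2:ℝ)^n)
        (fun n => by positivity)
        (tendsto_pow_atTop_nhds_zero_of_lt_one (by norm_num) (by norm_num)) key
      have := (single_iff (H := H) one_pos).1 this
      exact absurd this (not_le.2 hY)
    -- F nonempty
    have F_ne : F.Nonempty := by
      by_contra hne
      rw [Set.not_nonempty_iff_eq_empty] at hne
      have hEall : ∀ l : ℝ, 0 < l → H.prec (A l) (B l) := by
        intro l hl
        rcases hCH l hl with h | h
        · exact h.2
        · exact absurd h (by simp [hne])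
      have key : ∀ n : ℕ, H.prec ([(1,xv₁)] ++ scaleL ((1/2:ℝ)^n) [(1,w₀)])
          ([(1,xv₀)] ++ scaleL ((1/2:ℝ)^n) [(1,w₁)]) := by
        intro n
        have hepos : (0:ℝ) < (1/2:ℝ)^n := by positivity
        have h := hEall _ hepos
        simpa [hA, hB, scaleL_cons, mul_one] using h
      have := H.A6 [(1,xv₁)] [(1,xv₀)] [(1,w₀)] [(1,w₁)] (fun n => (1/2:ℝ)^n)
        (fun n => by positivity)
        (tendsto_pow_atTop_nhds_zero_of_lt_one (by norm_num) (by norm_num)) key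
      have := (single_iff (H := H) one_pos).1 this
      exact absurd this (not_le.2 hx)
    obtain ⟨f, hf⟩ := F_ne
    set r : ℝ := sInf E with hr
    have hbdd : BddBelow E := ⟨0, fun e he => le_of_lt he.1⟩
    have hfr : f ≤ r := le_csInf E_ne (fun e he => F_le_E e he f hf)
    have hrpos : 0 < r := lt_of_lt_of_le hf.1 hfr
    -- r ∈ E
    have hrE : H.prec (A r) (B r) := by
      have key : ∀ n : ℕ, H.prec (A r ++ scaleL ((1/2:ℝ)^n) [(1,w₀)])
          (B r ++ scaleL ((1/2:ℝ)^n) [(1,w₁)]) := by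
        intro n
        set e : ℝ := (1/2:ℝ)^n with he
        have hepos : 0 < e := by positivity
        obtain ⟨z, hz, hzlt⟩ := exists_lt_of_csInf_lt E_ne
          (show sInf E < r + e by rw [← hr]; linarith)
        have hre : r + e ∈ E := by
          rcases eq_or_lt_of_le (le_of_lt hzlt) with hzz | hzz
          · rwa [← hzz]
          · exact E_up z hz _ hzz
        have c1 : H.equ [(1,xv₁),(r,w₀),(e,w₀)] (A (r+e)) := by
          have hsp := split_single (H := H) hrpos hepos w₀
          exact ((equ_refl [(1,xv₁)]).append hsp).symm
        have c2 : H.equ (B (r+e)) [(1,xv₀),(r,w₁),(e,w₁)] := by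
          have hsp := split_single (H := H) hrpos hepos w₁
          exact (equ_refl [(1,xv₀)]).append hsp
        have main : H.prec [(1,xv₁),(r,w₀),(e,w₀)] [(1,xv₀),(r,w₁),(e,w₁)] :=
          H.A2 _ _ _ c1.1 (H.A2 _ _ _ hre.2 c2.1)
        simpa [hA, hB, scaleL_cons, mul_one] using main
      exact H.A6 (A r) (B r) [(1,w₀)] [(1,w₁)] (fun n => (1/2:ℝ)^n)
        (fun n => by positivity)
        (tendsto_pow_atTop_nhds_zero_of_lt_one (by norm_num) (by norm_num)) key
    -- r ∈ F
    have hrF : H.prec (B r) (A r) := by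
      have hFall : ∀ l : ℝ, 0 < l → l < r → H.prec (B l) (A l) := by
        intro l hl hlr
        rcases hCH l hl with h | h
        · exact absurd (csInf_le hbdd h) (not_le.2 hlr)
        · exact h.2
      have key : ∀ n : ℕ, H.prec (B r ++ scaleL (r/2 * (1/2:ℝ)^n) [(1,w₀)])
          (A r ++ scaleL (r/2 * (1/2:ℝ)^n) [(1,w₁)]) := by
        intro n
        set e : ℝ := r/2 * (1/2:ℝ)^n with he
        have hepos : 0 < e := by positivity
        have her : e < r := by
          rw [he]
          have h1 : ((1:ℝ)/2)^n ≤ 1 := pow_le_one₀ (by norm_num) (by norm_num)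
          nlinarith
        have hre : 0 < r - e := by linarith
        have hFre := hFall (r - e) hre (by linarith)
        have c1 : H.equ [(1,xv₀),(r,w₁),(e,w₀)] [(1,xv₀),(r-e,w₁),(e,w₁),(e,w₀)] := by
          have hsp := split_single (H := H) hre hepos w₁
          rw [show r - e + e = r by ring] at hsp
          exact (equ_refl [(1,xv₀)]).append (hsp.append (equ_refl [(e,w₀)]))
        have c2 : H.prec [(1,xv₀),(r-e,w₁),(e,w₁),(e,w₀)]
            [(1,xv₁),(r-e,w₀),(e,w₁),(e,w₀)] :=
          H.A3 (B (r-e)) (A (r-e)) [(e,w₁),(e,w₀)] [(e,w₁),(e,w₀)] hFre (H.A1 _)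
        have c3 : H.equ [(1,xv₁),(r-e,w₀),(e,w₁),(e,w₀)]
            [(1,xv₁),(r-e,w₀),(e,w₀),(e,w₁)] := by
          refine equ_of_perm ?_
          exact List.Perm.cons _ (List.Perm.cons _ (List.Perm.swap _ _ _))
        have c4 : H.equ [(1,xv₁),(r-e,w₀),(e,w₀),(e,w₁)] [(1,xv₁),(r,w₀),(e,w₁)] := by
          have hsp := split_single (H := H) hre hepos w₀
          rw [show r - e + e = r by ring] at hsp
          exact (equ_refl [(1,xv₁)]).append (hsp.symm.append (equ_refl [(e,w₁)]))
        have main : H.prec [(1,xv₀),(r,w₁),(e,w₀)] [(1,xv₁),(r,w₀),(e,w₁)] :=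
          H.A2 _ _ _ c1.1 (H.A2 _ _ _ c2 (H.A2 _ _ _ c3.1 c4.1))
        simpa [hA, hB, scaleL_cons, mul_one] using main
      exact H.A6 (B r) (A r) [(1,w₀)] [(1,w₁)] (fun n => r/2 * (1/2:ℝ)^n)
        (fun n => by positivity)
        (by simpa using (tendsto_pow_atTop_nhds_zero_of_lt_one
            (by norm_num : (0:ℝ) ≤ 1/2) (by norm_num : (1/2:ℝ) < 1)).const_mul (r/2)) key
    have hCal : H.equ (A r) (B r) := ⟨hrE, hrF⟩
    -- the constant
    refine ⟨r / (H.S i x₁ - H.S i x₀), div_pos hrpos hΔ, ?_⟩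
    intro x y hxy lam p q hlam hq hsp
    set d : ℝ := H.S i x - H.S i y with hd
    have hdpos : 0 < d := sub_pos.2 hxy
    set s : ℝ := lam * (r / (H.S i x₁ - H.S i x₀)) * d with hs
    set u : ℝ := lam * d / (H.S i x₁ - H.S i x₀) with hu
    have hupos : 0 < u := by positivity
    have hspos : 0 < s := by
      rw [hs]; positivity
    have hsu : s = u * r := by rw [hs, hu]; ring
    have hps : 0 < p - s := by linarith [hsp]
    have huΔ : u * (H.S i x₁ - H.S i x₀) = lam * d := by
      rw [hu]; field_simp
    -- L1 : within system i
    have L1 : H.equ [(lam,⟨i,x⟩),(u,xv₀)] [(lam,⟨i,y⟩),(u,xv₁)] := by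
      have h := H.hS i [(lam,x),(u,x₀)] [(lam,y),(u,x₁)] (by simp) (by simp)
        (by simp [posL, hlam, hupos]) (by simp [posL, hlam, hupos])
        (by simp [massL])
      simp only [liftL_cons, liftL_nil] at h
      have hent : entL (H.S i) [(lam,x),(u,x₀)] = entL (H.S i) [(lam,y),(u,x₁)] := by
        simp only [entL_cons, entL_nil, add_zero]
        linear_combination - huΔ - lam * hd
      exact ⟨h.2 hent.le, by
        have h' := H.hS i [(lam,y),(u,x₁)] [(lam,x),(u,x₀)] (by simp) (by simp)
          (by simp [posL, hlam, hupos]) (by simp [posL, hlam, hupos])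
          (by simp [massL])
        simp only [liftL_cons, liftL_nil] at h'
        exact h'.2 hent.ge⟩
    -- L2 : scaled calibration
    have L2 : H.equ [(u,xv₁),(s,w₀)] [(u,xv₀),(s,w₁)] := by
      have h := hCal.scale hupos
      simp only [hA, hB, scaleL_cons, scaleL_nil, mul_one] at h
      rwa [← hsu] at h
    -- the chain
    have t0 : H.equ [(lam,⟨i,x⟩),(p,w₀),(q,w₁),(u,xv₀)]
        [(lam,⟨i,x⟩),(u,xv₀),(p,w₀),(q,w₁)] := by
      refine equ_of_perm (List.Perm.cons _ ?_)
      exact List.perm_append_comm (l₁ := [(p,w₀),(q,w₁)]) (l₂ := [(u,xv₀)])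
    have t1 : H.equ [(lam,⟨i,x⟩),(u,xv₀),(p,w₀),(q,w₁)]
        [(lam,⟨i,y⟩),(u,xv₁),(p,w₀),(q,w₁)] :=
      L1.append (equ_refl [(p,w₀),(q,w₁)])
    have t2 : H.equ [(lam,⟨i,y⟩),(u,xv₁),(p,w₀),(q,w₁)]
        [(lam,⟨i,y⟩),(u,xv₁),(s,w₀),(p-s,w₀),(q,w₁)] := by
      have hsp2 := split_single (H := H) hspos hps w₀
      rw [show s + (p - s) = p by ring] at hsp2
      exact (equ_refl [(lam,⟨i,y⟩),(u,xv₁)]).append (hsp2.append (equ_refl [(q,w₁)]))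
    have t3 : H.equ [(lam,⟨i,y⟩),(u,xv₁),(s,w₀),(p-s,w₀),(q,w₁)]
        [(lam,⟨i,y⟩),(u,xv₀),(s,w₁),(p-s,w₀),(q,w₁)] :=
      (L2.append (equ_refl [(p-s,w₀),(q,w₁)])).cons _
    have t4 : H.equ [(lam,⟨i,y⟩),(u,xv₀),(s,w₁),(p-s,w₀),(q,w₁)]
        [(lam,⟨i,y⟩),(p-s,w₀),(s,w₁),(q,w₁),(u,xv₀)] := by
      refine equ_of_perm (List.Perm.cons _ ?_)
      exact (List.perm_append_comm (l₁ := [(u,xv₀)])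
        (l₂ := [(s,w₁),(p-s,w₀),(q,w₁)])).trans (List.Perm.swap _ _ _)
    have t5 : H.equ [(lam,⟨i,y⟩),(p-s,w₀),(s,w₁),(q,w₁),(u,xv₀)]
        [(lam,⟨i,y⟩),(p-s,w₀),(q+s,w₁),(u,xv₀)] := by
      have hsp2 := split_single (H := H) hspos hq w₁
      rw [show s + q = q + s by ring] at hsp2
      exact (equ_refl [(lam,⟨i,y⟩),(p-s,w₀)]).append
        (hsp2.symm.append (equ_refl [(u,xv₀)]))
    have main : H.equ ([(lam,⟨i,x⟩),(p,w₀),(q,w₁)] ++ [(u,xv₀)])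
        ([(lam,⟨i,y⟩),(p-s,w₀),(q+s,w₁)] ++ [(u,xv₀)]) :=
      (((t0.trans t1).trans t2).trans t3).trans (t4.trans t5)
    have hppos : 0 < p := lt_trans hspos hsp
    have hqs : 0 < q + s := by linarith
    exact cancel_equ (posL3 hlam hppos hq) (posL3 hlam hps hqs) main
  · refine ⟨1, one_pos, ?_⟩
    intro x y hxy
    exact absurd ⟨x, y, hxy⟩ hP
end LY

-- alignment of two lists whose images under `f` are permutations of each other
lemma align_perm {β γ : Type*} (f : β → γ) :
    ∀ (X Y : List β), (X.map f).Perm (Y.map f) →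
      ∃ Y', Y.Perm Y' ∧ List.Forall₂ (fun p q => f p = f q) X Y' := by
  classical
  intro X
  induction X with
  | nil =>
    intro Y h
    rw [List.map_nil] at h
    have h0 : Y.map f = [] := h.symm.eq_nil
    rw [List.map_eq_nil_iff] at h0
    exact ⟨[], by simp [h0], List.Forall₂.nil⟩
  | cons p X ih =>
    intro Y h
    have hmem : f p ∈ Y.map f := h.subset (by simp)
    rw [List.mem_map] at hmem
    obtain ⟨q, hqY, hfq⟩ := hmem
    have hY1 : Y.Perm (q :: Y.erase q) := List.perm_cons_erase hqY
    have h2 : (f p :: X.map f).Perm (f q :: (Y.erase q).map f) := by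
      simpa using h.trans (hY1.map f)
    rw [hfq] at h2
    obtain ⟨Y₂, hp2, hf2⟩ := ih (Y.erase q) h2.cons_inv
    exact ⟨q :: Y₂, hY1.trans (hp2.cons q), List.Forall₂.cons hfq.symm hf2⟩

namespace LY
variable {ι : Type u} {Γ : ι → Type v}

/-- transfer property at rate `c` between system `i` and the reference pair. -/
def TransferP (H : LY ι Γ) (i₀ : ι) (Y₀ Y₁ : Γ i₀) (i : ι) (c : ℝ) : Prop :=
  ∀ (x y : Γ i), H.S i y < H.S i x →
      ∀ lam p q : ℝ, 0 < lam → 0 < q → lam * c * (H.S i x - H.S i y) < p →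
      H.equ [(lam,⟨i,x⟩),(p,⟨i₀,Y₀⟩),(q,⟨i₀,Y₁⟩)]
        [(lam,⟨i,y⟩),(p - lam * c * (H.S i x - H.S i y),⟨i₀,Y₀⟩),
          (q + lam * c * (H.S i x - H.S i y),⟨i₀,Y₁⟩)]

lemma exists_transfer' {H : LY ι Γ} {i₀ : ι} {Y₀ Y₁ : Γ i₀}
    (hY : H.S i₀ Y₀ < H.S i₀ Y₁) (i : ι) :
    ∃ c : ℝ, 0 < c ∧ TransferP H i₀ Y₀ Y₁ i c := exists_transfer hY i

/-- global entropy candidate -/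
def sgF (H : LY ι Γ) (a : ι → ℝ) : (Σ j, Γ j) → ℝ := fun σ => a σ.1 * H.S σ.1 σ.2

/-- matching of compound states: same coefficients, same systems. -/
def Rrel : (ℝ × Σ j, Γ j) → (ℝ × Σ j, Γ j) → Prop :=
  fun p q => p.1 = q.1 ∧ p.2.1 = q.2.1

/-- total entropy mismatch bound -/
def sb (Sg : (Σ j, Γ j) → ℝ) (X Y : List (ℝ × Σ j, Γ j)) : ℝ :=
  ((X.zip Y).map fun pq => |pq.1.1 * Sg pq.1.2 - pq.2.1 * Sg pq.2.2|).sum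

lemma sb_nil (Sg : (Σ j, Γ j) → ℝ) (Y) : sb (Γ := Γ) Sg [] Y = 0 := by simp [sb]

lemma sb_cons (Sg : (Σ j, Γ j) → ℝ) (p q X Y) :
    sb (Γ := Γ) Sg (p :: X) (q :: Y) =
      |p.1 * Sg p.2 - q.1 * Sg q.2| + sb Sg X Y := by simp [sb]

lemma sb_nonneg (Sg : (Σ j, Γ j) → ℝ) (X Y) : 0 ≤ sb (Γ := Γ) Sg X Y :=
  List.sum_nonneg fun z hz => by
    obtain ⟨w, _, rfl⟩ := List.mem_map.1 hz; exact abs_nonneg _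

lemma absD_le_sb (Sg : (Σ j, Γ j) → ℝ) :
    ∀ {X Y : List (ℝ × Σ j, Γ j)}, List.Forall₂ Rrel X Y →
      |entL Sg X - entL Sg Y| ≤ sb Sg X Y := by
  intro X Y h
  induction h with
  | nil => simp [sb]
  | @cons p q X' Y' hR hF ih =>
    rw [sb_cons]
    simp only [entL_cons]
    have : p.1 * Sg p.2 + entL Sg X' - (q.1 * Sg q.2 + entL Sg Y') =
        (p.1 * Sg p.2 - q.1 * Sg q.2) + (entL Sg X' - entL Sg Y') := by ring
    rw [this]
    exact (abs_add_le _ _).trans (by linarith)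

section transfer
variable {H : LY ι Γ} {i₀ : ι} {Y₀ Y₁ : Γ i₀} {a : ι → ℝ}

lemma head_step {i : ι} (hai : 0 < a i) (htr : TransferP H i₀ Y₀ Y₁ i (a i))
    {x y : Γ i} {lam P Q s : ℝ} (hlam : 0 < lam)
    (hs : s = lam * a i * (H.S i x - H.S i y)) (hP : |s| < P) (hQ : |s| < Q) :
    H.equ [(lam,⟨i,x⟩),(P,⟨i₀,Y₀⟩),(Q,⟨i₀,Y₁⟩)]
      [(lam,⟨i,y⟩),(P - s,⟨i₀,Y₀⟩),(Q + s,⟨i₀,Y₁⟩)] := by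
  rcases lt_trichotomy (H.S i y) (H.S i x) with hxy | hxy | hxy
  · have hQ0 : 0 < Q := lt_of_le_of_lt (abs_nonneg s) hQ
    have hsP : lam * a i * (H.S i x - H.S i y) < P := by
      rw [← hs]; exact lt_of_le_of_lt (le_abs_self s) hP
    have h' := htr x y hxy lam P Q hlam hQ0 hsP
    rwa [← hs] at h'
  · have hs0 : s = 0 := by rw [hs, hxy, sub_self, mul_zero]
    rw [hs0, sub_zero, add_zero]
    exact (single_equ hlam hxy.symm).append (equ_refl [(P,⟨i₀,Y₀⟩),(Q,⟨i₀,Y₁⟩)])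
  · have hsneg : s < 0 := by
      rw [hs]
      exact mul_neg_of_pos_of_neg (mul_pos hlam hai) (by linarith)
    rw [abs_of_neg hsneg] at hP hQ
    have hs' : lam * a i * (H.S i y - H.S i x) = -s := by rw [hs]; ring
    have h' := htr y x hxy lam (P - s) (Q + s) hlam (by linarith)
      (by rw [hs']; linarith)
    rw [hs'] at h'
    rw [show P - s - -s = P by ring, show Q + s + -s = Q by ring] at h'
    exact h'.symm

lemma Mstar (ha : ∀ i, 0 < a i) (htr : ∀ i, TransferP H i₀ Y₀ Y₁ i (a i)) :
    ∀ {X Y : List (ℝ × Σ j, Γ j)}, List.Forall₂ Rrel X Y → posL X → posL Y →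
      ∀ P Q : ℝ, sb (sgF H a) X Y < P → sb (sgF H a) X Y < Q →
      H.equ (X ++ [(P,⟨i₀,Y₀⟩),(Q,⟨i₀,Y₁⟩)])
        (Y ++ [(P - (entL (sgF H a) X - entL (sgF H a) Y),⟨i₀,Y₀⟩),
               (Q + (entL (sgF H a) X - entL (sgF H a) Y),⟨i₀,Y₁⟩)]) := by
  intro X Y hF2
  induction hF2 with
  | nil =>
    intro _ _ P Q hP hQ
    simpa using equ_refl (H := H) [(P,⟨i₀,Y₀⟩),(Q,⟨i₀,Y₁⟩)]
  | @cons p q X' Y' hR hF2 ih =>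
    obtain ⟨lam, σ⟩ := p
    obtain ⟨i, x⟩ := σ
    obtain ⟨mu, τ⟩ := q
    obtain ⟨j, y⟩ := τ
    obtain ⟨h1, h2⟩ := hR
    simp only at h1 h2
    subst h1
    subst h2
    intro hpX hpY P Q hP hQ
    rw [posL_cons] at hpX hpY
    obtain ⟨hlam0, hX'⟩ := hpX
    obtain ⟨_, hY'⟩ := hpY
    have hlam : 0 < lam := hlam0
    set Sg : (Σ j, Γ j) → ℝ := sgF H a with hSgdef
    set s : ℝ := lam * a i * (H.S i x - H.S i y) with hs
    set D' : ℝ := entL Sg X' - entL Sg Y' with hD'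
    have hshead : lam * Sg ⟨i,x⟩ - lam * Sg ⟨i,y⟩ = s := by
      rw [hs, hSgdef]; simp [sgF]; ring
    have hsb : sb Sg ((lam,⟨i,x⟩) :: X') ((lam,⟨i,y⟩) :: Y') =
        |s| + sb Sg X' Y' := by rw [sb_cons, hshead]
    rw [hsb] at hP hQ
    have habs : |D'| ≤ sb Sg X' Y' := absD_le_sb Sg hF2
    have hs0 : 0 ≤ |s| := abs_nonneg s
    have hD1 := le_abs_self D'
    have hD2 := neg_abs_le D'
    have c2 := ih hX' hY' P Q (by linarith) (by linarith)
    have c3 := c2.cons (lam, ⟨i,x⟩)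
    have c5 : H.equ [(lam,⟨i,x⟩),(P - D',⟨i₀,Y₀⟩),(Q + D',⟨i₀,Y₁⟩)]
        [(lam,⟨i,y⟩),(P - D' - s,⟨i₀,Y₀⟩),(Q + D' + s,⟨i₀,Y₁⟩)] := by
      refine head_step (ha i) (htr i) hlam hs ?_ ?_
      · linarith
      · linarith
    have c6 := (equ_refl (H := H) Y').append c5
    have hDfull : entL Sg ((lam,⟨i,x⟩) :: X') - entL Sg ((lam,⟨i,y⟩) :: Y')
        = s + D' := by
      simp only [entL_cons]
      linear_combination hshead - hD'
    rw [hDfull, show P - (s + D') = P - D' - s by ring,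
      show Q + (s + D') = Q + D' + s by ring]
    exact ((c3.trans (equ_of_perm List.perm_middle.symm)).trans c6).trans
      (equ_of_perm List.perm_middle)
end transfer
end LY

namespace LY
variable {ι : Type u} {Γ : ι → Type v}

theorem main (H : LY ι Γ) :
    ∃ a B : ι → ℝ, ∃ Sg : (Σ j, Γ j) → ℝ,
      (∀ i, 0 < a i) ∧
      (∀ (i : ι) (x : Γ i), Sg ⟨i, x⟩ = a i * H.S i x + B i) ∧
      (∀ X Y : List (ℝ × Σ j, Γ j), entL Sg (X ++ Y) = entL Sg X + entL Sg Y) ∧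
      (∀ (t : ℝ) (X : List (ℝ × Σ j, Γ j)), entL Sg (scaleL t X) = t * entL Sg X) ∧
      (∀ X Y : List (ℝ × Σ j, Γ j), posL X → posL Y → SameSpace X Y →
        (H.prec X Y ↔ entL Sg X ≤ entL Sg Y)) := by
  by_cases hP : ∃ i₀ : ι, ∃ Y₀ Y₁ : Γ i₀, H.S i₀ Y₀ < H.S i₀ Y₁
  · obtain ⟨i₀, Y₀, Y₁, hY⟩ := hP
    choose a hapos htr using fun i => exists_transfer' (H := H) hY i
    refine ⟨a, fun _ => 0, sgF H a, hapos, ?_, fun X Y => entL_append _,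
      fun t X => entL_scaleL _, ?_⟩
    · intro i x; simp [sgF]
    · intro X Y hX hY2 hSS
      obtain ⟨Y', hYY', hF⟩ :=
        align_perm (fun p : ℝ × Σ j, Γ j => (p.1, p.2.1)) X Y hSS
      have hF2 : List.Forall₂ Rrel X Y' :=
        hF.imp (fun {p q} (h : (p.1, p.2.1) = (q.1, q.2.1)) =>
          ⟨(Prod.ext_iff.1 h).1, (Prod.ext_iff.1 h).2⟩)
      have hY'pos : posL Y' := posL_of_perm hYY' hY2
      set Sg : (Σ j, Γ j) → ℝ := sgF H a with hSg
      set D : ℝ := entL Sg X - entL Sg Y' with hD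
      have hentY : entL Sg Y = entL Sg Y' := entL_perm _ hYY'
      have habs : |D| ≤ sb Sg X Y' := absD_le_sb Sg hF2
      have hsb0 : 0 ≤ sb Sg X Y' := sb_nonneg Sg X Y'
      have hD1 := le_abs_self D
      have hD2 := neg_abs_le D
      set m : ℝ := sb Sg X Y' + |D| + 1 with hm
      have hmgt : sb Sg X Y' < m := by rw [hm]; linarith [abs_nonneg D]
      have hmD1 : 0 < m - D := by rw [hm]; linarith
      have hmD2 : 0 < m + D := by rw [hm]; linarith
      have hm0 : 0 < m := by rw [hm]; linarith [abs_nonneg D]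
      have hMs := Mstar hapos htr hF2 hX hY'pos m m hmgt hmgt
      have hbc := H.hS i₀ [(m - D, Y₀),(m + D, Y₁)] [(m,Y₀),(m,Y₁)]
        (by simp) (by simp) (by simp [posL, hmD1, hmD2]) (by simp [posL, hm0])
        (by simp [massL]; try ring)
      simp only [liftL_cons, liftL_nil, entL_cons, entL_nil, add_zero] at hbc
      have hprecYY' : H.prec X Y ↔ H.prec X Y' :=
        H.hperm _ _ _ _ (List.Perm.refl X) hYY'
      have hS01 : 0 < H.S i₀ Y₁ - H.S i₀ Y₀ := sub_pos.2 hY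
      constructor
      · intro hpr
        have h1 : H.prec (X ++ [(m,⟨i₀,Y₀⟩),(m,⟨i₀,Y₁⟩)])
            (Y' ++ [(m,⟨i₀,Y₀⟩),(m,⟨i₀,Y₁⟩)]) :=
          H.A3 _ _ _ _ (hprecYY'.1 hpr) (H.A1 _)
        have h2 := H.A2 _ _ _ hMs.2 h1
        have h3 : H.prec ([(m - D,⟨i₀,Y₀⟩),(m + D,⟨i₀,Y₁⟩)] ++ Y')
            ([(m,⟨i₀,Y₀⟩),(m,⟨i₀,Y₁⟩)] ++ Y') :=
          prec_of_perm List.perm_append_comm List.perm_append_comm h2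
        have h4 := cancel (posL2 hmD1 hmD2) (posL2 hm0 hm0) h3
        have h5 := hbc.1 h4
        have hD0 : D ≤ 0 := by
          by_contra hc
          push_neg at hc
          nlinarith [h5, mul_pos hc hS01]
        rw [hentY]
        rw [hD] at hD0
        linarith
      · intro hent
        have hD0 : D ≤ 0 := by
          rw [hD]
          rw [hentY] at hent
          linarith
        have hb : H.prec [(m - D,⟨i₀,Y₀⟩),(m + D,⟨i₀,Y₁⟩)]
            [(m,⟨i₀,Y₀⟩),(m,⟨i₀,Y₁⟩)] := by
          refine hbc.2 ?_
          have h6 : 0 ≤ (-D) * (H.S i₀ Y₁ - H.S i₀ Y₀) :=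
            mul_nonneg (neg_nonneg.2 hD0) hS01.le
          nlinarith [h6]
        have h1 : H.prec (Y' ++ [(m - D,⟨i₀,Y₀⟩),(m + D,⟨i₀,Y₁⟩)])
            (Y' ++ [(m,⟨i₀,Y₀⟩),(m,⟨i₀,Y₁⟩)]) :=
          H.A3 _ _ _ _ (H.A1 Y') hb
        have h2 := H.A2 _ _ _ hMs.1 h1
        exact hprecYY'.2 (cancel hX hY'pos h2)
  · have hall : ∀ (i : ι) (x y : Γ i), H.S i x = H.S i y := by
      intro i x y
      by_contra hne
      rcases lt_or_gt_of_ne hne with h | h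
      · exact hP ⟨i, x, y, h⟩
      · exact hP ⟨i, y, x, h⟩
    refine ⟨fun _ => 1, fun _ => 0, fun σ => H.S σ.1 σ.2, fun _ => one_pos, ?_,
      fun X Y => entL_append _, fun t X => entL_scaleL _, ?_⟩
    · intro i x; simp
    · intro X Y hX hY2 hSS
      obtain ⟨Y', hYY', hF⟩ :=
        align_perm (fun p : ℝ × Σ j, Γ j => (p.1, p.2.1)) X Y hSS
      have hF2 : List.Forall₂ Rrel X Y' :=
        hF.imp (fun {p q} (h : (p.1, p.2.1) = (q.1, q.2.1)) =>
          ⟨(Prod.ext_iff.1 h).1, (Prod.ext_iff.1 h).2⟩)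
      have key : ∀ (U V : List (ℝ × Σ j, Γ j)), List.Forall₂ Rrel U V → posL U →
          H.equ U V ∧ entL (fun σ : Σ j, Γ j => H.S σ.1 σ.2) U
            = entL (fun σ : Σ j, Γ j => H.S σ.1 σ.2) V := by
        intro U V h
        induction h with
        | nil => intro _; exact ⟨equ_refl [], rfl⟩
        | @cons p q U' V' hR h ih =>
          obtain ⟨lam, σ⟩ := p
          obtain ⟨i, x⟩ := σ
          obtain ⟨mu, τ⟩ := q
          obtain ⟨j, y⟩ := τ
          obtain ⟨h1, h2⟩ := hR
          simp only at h1 h2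
          subst h1
          subst h2
          intro hpos
          rw [posL_cons] at hpos
          obtain ⟨hlam0, hU'⟩ := hpos
          have hlam : 0 < lam := hlam0
          obtain ⟨ihe, ihs⟩ := ih hU'
          refine ⟨(single_equ hlam (hall i x y)).append ihe, ?_⟩
          simp only [entL_cons, ihs, hall i x y]
      obtain ⟨hequ, hent⟩ := key X Y' hF2 hX
      have hentY : entL (fun σ : Σ j, Γ j => H.S σ.1 σ.2) Y
          = entL (fun σ : Σ j, Γ j => H.S σ.1 σ.2) Y' := entL_perm _ hYY'
      constructor
      · intro _
        rw [hentY, hent]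
      · intro _
        exact (H.hperm X X Y' Y (List.Perm.refl X) hYY'.symm).mp hequ.1
end LY

/-- Theorem 2 of Lieb–Yngvason (consistent entropy scales): if CH holds for all
compound systems and each system `Γ i` has an entropy function `S i` in the
sense of Theorem 1, then there are constants `a i > 0` and `B i` such that the
entropy `Sg ⟨i, x⟩ = a i * S i x + B i` is additive, extensive, and such that
for states `X`, `Y` in the same state space, `X ≺ Y` iff `Sg(X) ≤ Sg(Y)`. -/
theorem consistent_entropy_scales {ι : Type*} {Γ : ι → Type*}
    (prec : List (ℝ × Σ j, Γ j) → List (ℝ × Σ j, Γ j) → Prop)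
    (hperm : ∀ X X' Y Y' : List (ℝ × Σ j, Γ j), X.Perm X' → Y.Perm Y' →
      (prec X Y ↔ prec X' Y'))
    -- A1–A6
    (A1 : ∀ X, prec X X)
    (A2 : ∀ X Y Z, prec X Y → prec Y Z → prec X Z)
    (A3 : ∀ X X' Y Y', prec X X' → prec Y Y' → prec (X ++ Y) (X' ++ Y'))
    (A4 : ∀ t : ℝ, 0 < t → ∀ X Y, prec X Y → prec (scaleL t X) (scaleL t Y))
    (A5 : ∀ (l t : ℝ) (x : Σ j, Γ j), 0 < l → l < 1 → 0 < t →
      prec [(t, x)] [((1 - l) * t, x), (l * t, x)] ∧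
      prec [((1 - l) * t, x), (l * t, x)] [(t, x)])
    (A6 : ∀ X Y Z₀ Z₁ (ε : ℕ → ℝ), (∀ n, 0 < ε n) →
      Filter.Tendsto ε Filter.atTop (nhds 0) →
      (∀ n, prec (X ++ scaleL (ε n) Z₀) (Y ++ scaleL (ε n) Z₁)) → prec X Y)
    -- CH for all compound systems
    (CH : ∀ X Y : List (ℝ × Σ j, Γ j), posL X → posL Y → SameSpace X Y →
      prec X Y ∨ prec Y X)
    -- each system has an entropy function in the sense of Theorem 1
    (S : ∀ i, Γ i → ℝ) (hS : ∀ i, IsEntropyFor prec i (S i)) :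
    ∃ a B : ι → ℝ, ∃ Sg : (Σ j, Γ j) → ℝ,
      (∀ i, 0 < a i) ∧
      (∀ (i : ι) (x : Γ i), Sg ⟨i, x⟩ = a i * S i x + B i) ∧
      -- additivity
      (∀ X Y : List (ℝ × Σ j, Γ j), entL Sg (X ++ Y) = entL Sg X + entL Sg Y) ∧
      -- extensivity
      (∀ (t : ℝ) (X : List (ℝ × Σ j, Γ j)), entL Sg (scaleL t X) = t * entL Sg X) ∧
      -- monotonicity for states in the same state space
      (∀ X Y : List (ℝ × Σ j, Γ j), posL X → posL Y → SameSpace X Y →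
        (prec X Y ↔ entL Sg X ≤ entL Sg Y)) := by
  exact LY.main ⟨prec, S, hperm, A1, A2, A3, A4, A5, A6, CH, hS⟩
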